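/- Let G=(V,E) be a twinless strongly connected directed graph. Then the 2-twinless block graph G^{2t} of G is a forest, i.e., it contains no cycle. -/

import Mathlib

/-- A directed graph on vertex type `V` is given by its edge relation `E`.
`restrictEdges E S` is the edge relation of the subgraph induced on `S`. -/
def restrictEdges {V : Type*} (E : V → V → Prop) (S : Set V) : V → V → Prop :=
  fun a b => E a b ∧ a ∈ S ∧ b ∈ S

/-- The induced subgraph on `S` is strongly connected: every vertex of `S` reaches
every vertex of `S` by a directed path staying inside `S`. -/
def StronglyConnectedOn {V : Type*} (E : V → V → Prop) (S : Set V) : Prop :=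
  ∀ ⦃x⦄, x ∈ S → ∀ ⦃y⦄, y ∈ S → Relation.ReflTransGen (restrictEdges E S) x y

/-- The induced subgraph on `S` is twinless strongly connected: it has a strongly
connected spanning subgraph (edge set `E'` inside `S`) with no pair of antiparallel
edges (if `(x, y) ∈ E'` then `(y, x) ∉ E'`). -/
def TwinlessSCOn {V : Type*} (E : V → V → Prop) (S : Set V) : Prop :=
  ∃ E' : V → V → Prop,
    (∀ a b, E' a b → E a b ∧ a ∈ S ∧ b ∈ S) ∧
    (∀ a b, E' a b → ¬ E' b a) ∧
    StronglyConnectedOn E' S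

/-- `C` is a strongly connected component of the subgraph induced on `S`:
a maximal subset of `S` whose induced subgraph is strongly connected. -/
def IsSCCWithin {V : Type*} (E : V → V → Prop) (S C : Set V) : Prop :=
  C ⊆ S ∧ StronglyConnectedOn E C ∧
    ∀ D : Set V, C ⊆ D → D ⊆ S → StronglyConnectedOn E D → D = C

/-- `C` is a twinless strongly connected component of the subgraph induced on `S`:
a maximal subset of `S` whose induced subgraph is twinless strongly connected. -/
def IsTSCCWithin {V : Type*} (E : V → V → Prop) (S C : Set V) : Prop :=
  C ⊆ S ∧ TwinlessSCOn E C ∧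
    ∀ D : Set V, C ⊆ D → D ⊆ S → TwinlessSCOn E D → D = C

/-- `x` and `y` lie in the same twinless strongly connected component of the
subgraph induced on `S`. -/
def SameTSCC {V : Type*} (E : V → V → Prop) (S : Set V) (x y : V) : Prop :=
  ∃ C : Set V, IsTSCCWithin E S C ∧ x ∈ C ∧ y ∈ C

/-- `x` and `y` lie in the same strongly connected component of the
subgraph induced on `S`. -/
def SameSCC {V : Type*} (E : V → V → Prop) (S : Set V) (x y : V) : Prop :=
  ∃ C : Set V, IsSCCWithin E S C ∧ x ∈ C ∧ y ∈ C

/-- The relation `x ≈ y` ("x 2t-related to y"): `x` and `y` are distinct and, for every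
vertex `w ∉ {x, y}`, the vertices `x, y` lie in the same twinless strongly connected
component of `G ∖ {w}`. -/
def Rel2t {V : Type*} (E : V → V → Prop) (x y : V) : Prop :=
  x ≠ y ∧ ∀ w : V, w ≠ x → w ≠ y → SameTSCC E (({w} : Set V)ᶜ) x y

/-- `x` and `y` are distinct and, for every vertex `w ∉ {x, y}`, the vertices `x, y`
lie in the same strongly connected component of `G ∖ {w}`. -/
def Rel2s {V : Type*} (E : V → V → Prop) (x y : V) : Prop :=
  x ≠ y ∧ ∀ w : V, w ≠ x → w ≠ y → SameSCC E (({w} : Set V)ᶜ) x y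

/-- A 2-twinless block: a maximal set `B` with `|B| ≥ 2` such that `x ≈ y`
for all distinct `x, y ∈ B`. -/
def Is2TwinlessBlock {V : Type*} (E : V → V → Prop) (B : Set V) : Prop :=
  B.Nontrivial ∧ (∀ ⦃x⦄, x ∈ B → ∀ ⦃y⦄, y ∈ B → x ≠ y → Rel2t E x y) ∧
    ∀ D : Set V, B ⊆ D → (∀ ⦃x⦄, x ∈ D → ∀ ⦃y⦄, y ∈ D → x ≠ y → Rel2t E x y) → D = B

/-- A 2-strong block: a maximal set `B` with `|B| ≥ 2` such that for all distinct
`x, y ∈ B` and every `u ∉ {x, y}`, the vertices `x, y` lie in the same strongly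
connected component of `G ∖ {u}`. -/
def Is2StrongBlock {V : Type*} (E : V → V → Prop) (B : Set V) : Prop :=
  B.Nontrivial ∧ (∀ ⦃x⦄, x ∈ B → ∀ ⦃y⦄, y ∈ B → x ≠ y → Rel2s E x y) ∧
    ∀ D : Set V, B ⊆ D → (∀ ⦃x⦄, x ∈ D → ∀ ⦃y⦄, y ∈ D → x ≠ y → Rel2s E x y) → D = B

/-- A twinless articulation point: a vertex whose removal increases the number of
twinless strongly connected components. -/
def IsTwinlessArticulationPoint {V : Type*} (E : V → V → Prop) (v : V) : Prop :=
  ({C : Set V | IsTSCCWithin E Set.univ C}).ncard <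
    ({C : Set V | IsTSCCWithin E (({v} : Set V)ᶜ) C}).ncard

/-- Adjacency between a block vertex `B` and an ordinary vertex `v` in the
2-twinless block graph: `B` is a 2-twinless block and there is another
2-twinless block `B'` with `B ∩ B' = {v}`. -/
def BlockVertexAdj {V : Type*} (E : V → V → Prop) (B : Set V) (v : V) : Prop :=
  Is2TwinlessBlock E B ∧
    ∃ B' : Set V, Is2TwinlessBlock E B' ∧ B' ≠ B ∧ B ∩ B' = {v}

/-- The 2-twinless block graph `G^{2t}`: an undirected simple graph whose vertices are
the 2-twinless blocks (left summand) and the vertices of `G` (right summand, only those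
belonging to at least two blocks are non-isolated), with an edge between block `B_i` and
vertex `v` whenever `B_i ∩ B_j = {v}` for some other block `B_j`. -/
def blockGraph {V : Type*} (E : V → V → Prop) : SimpleGraph (Set V ⊕ V) where
  Adj a b :=
    match a, b with
    | Sum.inl B, Sum.inr v => BlockVertexAdj E B v
    | Sum.inr v, Sum.inl B => BlockVertexAdj E B v
    | _, _ => False
  symm := ⟨by
    rintro (B | v) (B' | v') h
    · exact h.elim
    · exact h
    · exact h
    · exact h.elim⟩
  loopless := ⟨by
    rintro (B | v) h
    · exact h
    · exact h⟩

section Auxiliary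

variable {V : Type*}

lemma rtg_lift {R R' : V → V → Prop} (h : ∀ a b, R a b → Relation.ReflTransGen R' a b)
    {x y : V} (hxy : Relation.ReflTransGen R x y) : Relation.ReflTransGen R' x y := by
  induction hxy with
  | refl => exact .refl
  | tail _ hbc ih => exact ih.trans (h _ _ hbc)

lemma twinlessSCOn_union {E : V → V → Prop} {C C' : Set V}
    (h : TwinlessSCOn E C) (h' : TwinlessSCOn E C') (hne : (C ∩ C').Nonempty) :
    TwinlessSCOn E (C ∪ C') := by
  obtain ⟨E1, hE1, tw1, sc1⟩ := h
  obtain ⟨E2, hE2, tw2, sc2⟩ := h'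
  obtain ⟨z, hzC, hzC'⟩ := hne
  refine ⟨fun a b => E1 a b ∨ (E2 a b ∧ ¬ E1 b a), ?_, ?_, ?_⟩
  · rintro a b (hab | ⟨hab, -⟩)
    · exact ⟨(hE1 a b hab).1, Or.inl (hE1 a b hab).2.1, Or.inl (hE1 a b hab).2.2⟩
    · exact ⟨(hE2 a b hab).1, Or.inr (hE2 a b hab).2.1, Or.inr (hE2 a b hab).2.2⟩
  · rintro a b (hab | ⟨hab, hnb⟩) (hba | ⟨hba, hna⟩)
    · exact tw1 a b hab hba
    · exact hna hab
    · exact hnb hba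
    · exact tw2 a b hab hba
  · -- strong connectivity of the union
    set F : V → V → Prop := fun a b => E1 a b ∨ (E2 a b ∧ ¬ E1 b a) with hF
    have lift1 : ∀ a b, restrictEdges E1 C a b →
        Relation.ReflTransGen (restrictEdges F (C ∪ C')) a b := by
      rintro a b ⟨hab, haC, hbC⟩
      exact Relation.ReflTransGen.single ⟨Or.inl hab, Or.inl haC, Or.inl hbC⟩
    have lift2 : ∀ a b, restrictEdges E2 C' a b →
        Relation.ReflTransGen (restrictEdges F (C ∪ C')) a b := by
      rintro a b ⟨hab, haC', hbC'⟩
      by_cases hba : E1 b a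
      · -- both a b lie in C; connect via E1
        have haC : a ∈ C := (hE1 b a hba).2.2
        have hbC : b ∈ C := (hE1 b a hba).2.1
        exact rtg_lift lift1 (sc1 haC hbC)
      · exact Relation.ReflTransGen.single ⟨Or.inr ⟨hab, hba⟩, Or.inr haC', Or.inr hbC'⟩
    have path1 : ∀ x ∈ C, ∀ y ∈ C, Relation.ReflTransGen (restrictEdges F (C ∪ C')) x y :=
      fun x hx y hy => rtg_lift lift1 (sc1 hx hy)
    have path2 : ∀ x ∈ C', ∀ y ∈ C', Relation.ReflTransGen (restrictEdges F (C ∪ C')) x y :=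
      fun x hx y hy => rtg_lift lift2 (sc2 hx hy)
    rintro x (hx | hx) y (hy | hy)
    · exact path1 x hx y hy
    · exact (path1 x hx z hzC).trans (path2 z hzC' y hy)
    · exact (path2 x hx z hzC').trans (path1 z hzC y hy)
    · exact path2 x hx y hy

lemma exists_tscc [Fintype V] {E : V → V → Prop} {S C : Set V}
    (hCS : C ⊆ S) (hC : TwinlessSCOn E C) :
    ∃ M, IsTSCCWithin E S M ∧ C ⊆ M := by
  classical
  set T : Set (Set V) := {D | C ⊆ D ∧ D ⊆ S ∧ TwinlessSCOn E D} with hT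
  have hTfin : T.Finite := Set.toFinite T
  have hTne : T.Nonempty := ⟨C, subset_rfl, hCS, hC⟩
  obtain ⟨M, hM⟩ := Set.Finite.exists_maximal hTfin hTne
  exact ⟨M, ⟨hM.1.2.1, hM.1.2.2, fun D hMD hDS hD =>
    le_antisymm (hM.2 ⟨hM.1.1.trans hMD, hDS, hD⟩ hMD) hMD⟩, hM.1.1⟩

lemma tscc_eq {E : V → V → Prop} {S C C' : Set V}
    (h : IsTSCCWithin E S C) (h' : IsTSCCWithin E S C') (hne : (C ∩ C').Nonempty) :
    C = C' := by
  have hu := twinlessSCOn_union h.2.1 h'.2.1 hne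
  have h1 : C ∪ C' = C :=
    h.2.2 _ Set.subset_union_left (Set.union_subset h.1 h'.1) hu
  have h2 : C ∪ C' = C' :=
    h'.2.2 _ Set.subset_union_right (Set.union_subset h.1 h'.1) hu
  rw [← h1, h2]

lemma sameTSCC_symm {E : V → V → Prop} {S : Set V} {x y : V}
    (h : SameTSCC E S x y) : SameTSCC E S y x := by
  obtain ⟨Cc, hC, hx, hy⟩ := h
  exact ⟨Cc, hC, hy, hx⟩

lemma sameTSCC_trans {E : V → V → Prop} {S : Set V} {x y z : V}
    (h : SameTSCC E S x y) (h' : SameTSCC E S y z) : SameTSCC E S x z := by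
  obtain ⟨Cc, hC, hx, hy⟩ := h
  obtain ⟨Cc', hC', hy', hz⟩ := h'
  have : Cc = Cc' := tscc_eq hC hC' ⟨y, hy, hy'⟩
  exact ⟨Cc, hC, hx, this ▸ hz⟩

lemma rel2t_symm {E : V → V → Prop} {x y : V} (h : Rel2t E x y) : Rel2t E y x :=
  ⟨h.1.symm, fun w hw1 hw2 => sameTSCC_symm (h.2 w hw2 hw1)⟩

end Auxiliary

section Chaining

variable {V : Type*}

/-- If all pairs within `B` are 2t-related, all pairs within `S` are 2t-related, and
`B ∩ S` contains two distinct vertices `p, q`, then all pairs within `B ∪ S` are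
2t-related. -/
lemma union_pairwise {E : V → V → Prop} {B S : Set V}
    (hB : ∀ x ∈ B, ∀ y ∈ B, x ≠ y → Rel2t E x y)
    (hS : ∀ x ∈ S, ∀ y ∈ S, x ≠ y → Rel2t E x y)
    {p q : V} (hpB : p ∈ B) (hqB : q ∈ B) (hpS : p ∈ S) (hqS : q ∈ S) (hpq : p ≠ q) :
    ∀ x ∈ B ∪ S, ∀ y ∈ B ∪ S, x ≠ y → Rel2t E x y := by
  have key : ∀ x ∈ B, ∀ y ∈ S, x ≠ y → Rel2t E x y := by
    intro x hx y hy hxy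
    by_cases hyB : y ∈ B
    · exact hB x hx y hyB hxy
    by_cases hxS : x ∈ S
    · exact hS x hxS y hy hxy
    refine ⟨hxy, fun w hwx hwy => ?_⟩
    obtain ⟨v, hvB, hvS, hvw⟩ : ∃ v, v ∈ B ∧ v ∈ S ∧ w ≠ v := by
      by_cases hwp : w = p
      · exact ⟨q, hqB, hqS, fun h => hpq (by rw [← hwp, h])⟩
      · exact ⟨p, hpB, hpS, hwp⟩
    have hxv : x ≠ v := fun h => hxS (h ▸ hvS)
    have hvy : v ≠ y := fun h => hyB (h ▸ hvB)
    have s1 := (hB x hx v hvB hxv).2 w hwx hvw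
    have s2 := (hS v hvS y hy hvy).2 w hvw hwy
    exact sameTSCC_trans s1 s2
  rintro x (hx | hx) y (hy | hy) hxy
  · exact hB x hx y hy hxy
  · exact key x hx y hy hxy
  · exact rel2t_symm (key y hy x hx hxy.symm)
  · exact hS x hx y hy hxy

open Fin.NatCast in
/-- Vertices forming a cyclic chain of blocks are pairwise 2t-related. -/
lemma cyclic_chain {E : V → V → Prop} {k : ℕ} [NeZero k] (hk : 2 ≤ k)
    (vv : Fin k → V) (hinj : Function.Injective vv) (BF : Fin k → Set V)
    (hcc : ∀ i : Fin k, Is2TwinlessBlock E (BF i) ∧ vv i ∈ BF i ∧ vv (i + 1) ∈ BF i) :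
    ∀ i j : Fin k, i ≠ j → Rel2t E (vv i) (vv j) := by
  have hone : (1 : Fin k).val = 1 := by
    have := Fin.val_natCast 1 k
    simpa [Nat.mod_eq_of_lt (show 1 < k by omega)] using this
  have hsucc_ne : ∀ i : Fin k, i ≠ i + 1 := by
    intro i h
    have hv : i.val = (i + 1).val := congrArg Fin.val h
    rw [Fin.val_add, hone] at hv
    have hik := i.isLt
    rcases Nat.lt_or_ge (i.val + 1) k with h1 | h1
    · rw [Nat.mod_eq_of_lt h1] at hv; omega
    · have hk' : i.val + 1 = k := by omega
      rw [hk', Nat.mod_self] at hv; omega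
  intro i j hij
  refine ⟨hinj.ne hij, fun w hwi hwj => ?_⟩
  -- step relation
  set Rw : V → V → Prop := fun x y => x = y ∨ SameTSCC E (({w} : Set V)ᶜ) x y with hRw
  have Rwtrans : ∀ {x y z}, Rw x y → Rw y z → Rw x z := by
    rintro x y z (rfl | h1) (rfl | h2)
    · exact Or.inl rfl
    · exact Or.inr h2
    · exact Or.inr h1
    · exact Or.inr (sameTSCC_trans h1 h2)
  have Rwsymm : ∀ {x y}, Rw x y → Rw y x := by
    rintro x y (rfl | h1)
    · exact Or.inl rfl
    · exact Or.inr (sameTSCC_symm h1)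
  have step : ∀ (i : Fin k), w ≠ vv i → w ≠ vv (i + 1) → Rw (vv i) (vv (i + 1)) := by
    intro i hw1 hw2
    exact Or.inr (((hcc i).1.2.1 (hcc i).2.1 (hcc i).2.2 (hinj.ne (hsucc_ne i))).2 w hw1 hw2)
  -- forward chaining
  have forward : ∀ (t : ℕ) (a : Fin k),
      (∀ s : ℕ, 0 < s → s < t → w ≠ vv (a + (s : Fin k))) →
      w ≠ vv a → w ≠ vv (a + (t : Fin k)) → Rw (vv a) (vv (a + (t : Fin k))) := by
    intro t
    induction t with
    | zero => intro a _ _ _; simp only [Nat.cast_zero, add_zero]; exact Or.inl rfl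
    | succ t ih =>
      intro a hint hwa hwt1
      have e1 : ((t + 1 : ℕ) : Fin k) = (t : Fin k) + 1 := by push_cast; ring
      have hwt : w ≠ vv (a + (t : Fin k)) := by
        rcases Nat.eq_zero_or_pos t with h0 | hpos
        · subst h0; simpa using hwa
        · exact hint t hpos (Nat.lt_succ_self t)
      have hwt1' : w ≠ vv (a + (t : Fin k) + 1) := by
        rwa [e1, ← add_assoc] at hwt1
      have s1 := ih a (fun s hs hst => hint s hs (by omega)) hwa hwt
      have s2 := step (a + (t : Fin k)) hwt hwt1'
      have := Rwtrans s1 s2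
      rwa [e1, ← add_assoc]
  -- choose direction around the cycle
  set t : ℕ := (j - i).val with ht
  have htk : t < k := (j - i).isLt
  have ht0 : t ≠ 0 := by
    intro h0
    have : j - i = 0 := by
      apply Fin.val_injective; simpa [ht] using h0
    have : j = i := by
      have := congrArg (· + i) this
      simpa [sub_add_cancel] using this
    exact hij this.symm
  have hit : i + (t : Fin k) = j := by
    rw [ht, Fin.cast_val_eq_self, add_comm, sub_add_cancel]
  by_cases hcase : ∀ s : ℕ, 0 < s → s < t → w ≠ vv (i + (s : Fin k))
  · have := forward t i hcase hwi (hit ▸ hwj)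
    rw [hit] at this
    rcases this with heq | hsame
    · exact absurd (hinj heq) hij
    · exact hsame
  · push_neg at hcase
    obtain ⟨s0, hs0pos, hs0t, hw0⟩ := hcase
    have hjt : j + ((k - t : ℕ) : Fin k) = i := by
      rw [← hit, add_assoc, ← Nat.cast_add, Nat.add_sub_cancel' (le_of_lt htk),
        Fin.natCast_self, add_zero]
    have hintb : ∀ s : ℕ, 0 < s → s < k - t → w ≠ vv (j + (s : Fin k)) := by
      intro s hs hsk heq
      have h1 : vv (i + (s0 : Fin k)) = vv (j + (s : Fin k)) := hw0 ▸ heq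
      have h2 : i + (s0 : Fin k) = j + (s : Fin k) := hinj h1
      rw [← hit, add_assoc, ← Nat.cast_add] at h2
      have h3 : (s0 : Fin k) = ((t + s : ℕ) : Fin k) := add_left_cancel h2
      have h4 : s0 % k = (t + s) % k := by
        have := congrArg Fin.val h3
        rwa [Fin.val_natCast, Fin.val_natCast] at this
      rw [Nat.mod_eq_of_lt (by omega), Nat.mod_eq_of_lt (by omega)] at h4
      omega
    have := forward (k - t) j hintb hwj (hjt ▸ hwi)
    rw [hjt] at this
    rcases Rwsymm this with heq | hsame
    · exact absurd (hinj heq) hij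
    · exact hsame

end Chaining

section WalkExtraction

open SimpleGraph

variable {α : Type*} {G : SimpleGraph α}

lemma walk_getVert_eq_support_getElem {u v : α} (p : G.Walk u v) :
    ∀ {i : ℕ} (hi : i ≤ p.length),
      p.getVert i = p.support[i]'(by rw [Walk.length_support]; omega) := by
  induction p with
  | nil =>
    intro i hi
    have : i = 0 := by simpa using hi
    subst this
    simp
  | cons h q ih =>
    intro i hi
    cases i with
    | zero => simp
    | succ n =>
      rw [Walk.getVert_cons_succ]
      rw [ih (i := n) (by simpa using hi)]
      simp [Walk.support_cons]

lemma cycle_getVert_injOn {u : α} {c : G.Walk u u} (hc : c.IsCycle) :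
    ∀ i < c.length, ∀ j < c.length, c.getVert i = c.getVert j → i = j := by
  have hnd : c.support.tail.Nodup := hc.support_nodup
  have hlen : c.support.length = c.length + 1 := Walk.length_support c
  have htl : c.support.tail.length = c.length := by rw [List.length_tail, hlen]; omega
  have hsup : ∀ m, 1 ≤ m → m ≤ c.length →
      c.support.tail[m - 1]? = some (c.getVert m) := by
    intro m h1 h2
    have h3 : m - 1 + 1 = m := by omega
    rw [List.getElem?_tail, h3,
      List.getElem?_eq_getElem (show m < c.support.length by omega)]
    rw [← walk_getVert_eq_support_getElem c h2]
  have key : ∀ m m', 1 ≤ m → m ≤ c.length → 1 ≤ m' → m' ≤ c.length →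
      c.getVert m = c.getVert m' → m = m' := by
    intro m m' h1 h2 h3 h4 heq
    have h5 : c.support.tail[m - 1]? = c.support.tail[m' - 1]? := by
      rw [hsup m h1 h2, hsup m' h3 h4, heq]
    have := (List.getElem?_inj (show m - 1 < c.support.tail.length by omega) hnd).mp h5
    omega
  intro i hi j hj heq
  rcases Nat.eq_zero_or_pos i with rfl | hi1
  · rcases Nat.eq_zero_or_pos j with rfl | hj1
    · rfl
    · exfalso
      have h0 : c.getVert c.length = c.getVert j := by
        rw [Walk.getVert_length, ← heq]
        exact (Walk.getVert_zero c).symm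
      have := key c.length j (by have := hc.three_le_length; omega) le_rfl hj1
        (le_of_lt hj) h0
      omega
  · rcases Nat.eq_zero_or_pos j with rfl | hj1
    · exfalso
      have h0 : c.getVert i = c.getVert c.length := by
        rw [Walk.getVert_length, heq]
        exact Walk.getVert_zero c
      have := key i c.length hi1 (le_of_lt hi) (by have := hc.three_le_length; omega)
        le_rfl h0
      omega
    · exact key i j hi1 (le_of_lt hi) hj1 (le_of_lt hj) heq

end WalkExtraction

section Main

variable {V : Type*}

lemma mem_of_blockVertexAdj {E : V → V → Prop} {B : Set V} {v : V}
    (h : BlockVertexAdj E B v) : v ∈ B := by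
  obtain ⟨-, B', -, -, hint⟩ := h
  have : v ∈ B ∩ B' := by rw [hint]; exact rfl
  exact this.1

lemma no_cycle_at_inr [Fintype V] (E : V → V → Prop) (v0 : V)
    (c : (blockGraph E).Walk (Sum.inr v0) (Sum.inr v0)) : ¬ c.IsCycle := by
  intro hc
  classical
  set n := c.length with hn
  have hn3 : 3 ≤ n := hc.three_le_length
  -- alternation
  have alt : ∀ i ≤ n, (Even i → ∃ u, c.getVert i = Sum.inr u) ∧
      (¬ Even i → ∃ B, c.getVert i = Sum.inl B) := by
    intro i
    induction i with
    | zero =>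
      intro _
      exact ⟨fun _ => ⟨v0, c.getVert_zero⟩, fun h => absurd Even.zero h⟩
    | succ m ih =>
      intro hm
      have ihm := ih (by omega)
      have hadj := c.adj_getVert_succ (show m < n by omega)
      constructor
      · intro hev
        have hodd : ¬ Even m := by
          intro h; exact (Nat.even_add_one.mp hev) h
        obtain ⟨B, hB⟩ := ihm.2 hodd
        rw [hB] at hadj
        rcases hx : c.getVert (m + 1) with B' | u
        · rw [hx] at hadj; exact absurd hadj (by simp [blockGraph])
        · exact ⟨u, rfl⟩
      · intro hodd
        have hev : Even m := by
          rcases Nat.even_or_odd m with h | h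
          · exact h
          · exact absurd (Nat.even_add_one.mpr (Nat.not_even_iff_odd.mpr h)) hodd
        obtain ⟨u, hu⟩ := ihm.1 hev
        rw [hu] at hadj
        rcases hx : c.getVert (m + 1) with B' | u'
        · exact ⟨B', rfl⟩
        · rw [hx] at hadj; exact absurd hadj (by simp [blockGraph])
  -- n is even
  have hneven : Even n := by
    by_contra hodd
    obtain ⟨B, hB⟩ := (alt n le_rfl).2 hodd
    rw [c.getVert_length] at hB
    exact absurd hB (by simp)
  obtain ⟨k, hk2⟩ := hneven
  have hkn : n = 2 * k := by omega
  have hk : 2 ≤ k := by omega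
  haveI : NeZero k := ⟨by omega⟩
  -- extract vertices and blocks
  set vf : ℕ → V := fun i => Sum.elim (fun _ => v0) id (c.getVert (2 * i)) with hvf
  set Bf : ℕ → Set V := fun i => Sum.elim id (fun _ => (∅ : Set V)) (c.getVert (2 * i + 1)) with hBf
  have hvspec : ∀ i ≤ k, c.getVert (2 * i) = Sum.inr (vf i) := by
    intro i hi
    obtain ⟨u, hu⟩ := (alt (2 * i) (by omega)).1 ⟨i, by ring⟩
    rw [hvf]; simp only; rw [hu]; rfl
  have hBspec : ∀ i < k, c.getVert (2 * i + 1) = Sum.inl (Bf i) := by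
    intro i hi
    obtain ⟨B, hB⟩ := (alt (2 * i + 1) (by omega)).2 (by simp [Nat.even_add_one, parity_simps])
    rw [hBf]; simp only; rw [hB]; rfl
  have hv0 : vf 0 = v0 := by
    have := hvspec 0 (by omega)
    rw [Nat.mul_zero, c.getVert_zero] at this
    exact (Sum.inr.injEq _ _).mp this.symm
  have hvk : vf k = v0 := by
    have := hvspec k le_rfl
    rw [← hkn, c.getVert_length] at this
    exact ((Sum.inr.injEq _ _).mp this).symm
  -- adjacency facts
  have hadj1 : ∀ i < k, BlockVertexAdj E (Bf i) (vf i) := by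
    intro i hi
    have hadj := c.adj_getVert_succ (show 2 * i < n by omega)
    rw [hvspec i (le_of_lt hi), hBspec i hi] at hadj
    exact hadj
  have hadj2 : ∀ i < k, BlockVertexAdj E (Bf i) (vf (i + 1)) := by
    intro i hi
    have hadj := c.adj_getVert_succ (show 2 * i + 1 < n by omega)
    have h22 : 2 * i + 1 + 1 = 2 * (i + 1) := by ring
    rw [hBspec i hi, h22, hvspec (i + 1) (by omega)] at hadj
    exact hadj
  -- injectivity
  have hvinj : ∀ i < k, ∀ j < k, vf i = vf j → i = j := by
    intro i hi j hj heq
    have h1 : c.getVert (2 * i) = c.getVert (2 * j) := by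
      rw [hvspec i (le_of_lt hi), hvspec j (le_of_lt hj), heq]
    have := cycle_getVert_injOn hc (2 * i) (by omega) (2 * j) (by omega) h1
    omega
  have hB01 : Bf 0 ≠ Bf 1 := by
    intro heq
    have h1 : c.getVert (2 * 0 + 1) = c.getVert (2 * 1 + 1) := by
      rw [hBspec 0 (by omega), hBspec 1 (by omega), heq]
    have := cycle_getVert_injOn hc (2 * 0 + 1) (by omega) (2 * 1 + 1) (by omega) h1
    omega
  -- Fin k versions
  set vvF : Fin k → V := fun i => vf i.val with hvvF
  set BFF : Fin k → Set V := fun i => Bf i.val with hBFF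
  have hone : (1 : Fin k).val = 1 := by
    have := Fin.val_natCast 1 k
    simpa [Nat.mod_eq_of_lt (show 1 < k by omega)] using this
  have hvadd : ∀ i : Fin k, vvF (i + 1) = vf (i.val + 1) := by
    intro i
    rw [hvvF]
    simp only
    rw [Fin.val_add, hone]
    rcases Nat.lt_or_ge (i.val + 1) k with h1 | h1
    · rw [Nat.mod_eq_of_lt h1]
    · have hik := i.isLt
      have hik2 : i.val + 1 = k := by omega
      rw [hik2, Nat.mod_self, hv0, hvk]
  have hinjF : Function.Injective vvF := by
    intro i j heq
    exact Fin.val_injective (hvinj i.val i.isLt j.val j.isLt heq)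
  have hccF : ∀ i : Fin k, Is2TwinlessBlock E (BFF i) ∧ vvF i ∈ BFF i ∧ vvF (i + 1) ∈ BFF i := by
    intro i
    refine ⟨(hadj1 i.val i.isLt).1, mem_of_blockVertexAdj (hadj1 i.val i.isLt), ?_⟩
    rw [hvadd i]
    exact mem_of_blockVertexAdj (hadj2 i.val i.isLt)
  -- pairwise Rel2t on the cycle vertices
  have hpair := cyclic_chain hk vvF hinjF BFF hccF
  set S : Set V := Set.range vvF with hSdef
  have hSpair : ∀ x ∈ S, ∀ y ∈ S, x ≠ y → Rel2t E x y := by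
    rintro x ⟨i, rfl⟩ y ⟨j, rfl⟩ hxy
    exact hpair i j (fun h => hxy (congrArg vvF h))
  have hsucc_ne : ∀ i : Fin k, i ≠ i + 1 := by
    intro i h
    have hv : i.val = (i + 1).val := congrArg Fin.val h
    rw [Fin.val_add, hone] at hv
    have hik := i.isLt
    rcases Nat.lt_or_ge (i.val + 1) k with h1 | h1
    · rw [Nat.mod_eq_of_lt h1] at hv; omega
    · have hk' : i.val + 1 = k := by omega
      rw [hk', Nat.mod_self] at hv; omega
  -- each block of the cycle absorbs all cycle vertices
  have absorb : ∀ i : Fin k, S ⊆ BFF i := by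
    intro i
    obtain ⟨hblk, hvi, hvi1⟩ := hccF i
    have hBpair := hblk.2.1
    have hBpair' : ∀ x ∈ BFF i, ∀ y ∈ BFF i, x ≠ y → Rel2t E x y :=
      fun x hx y hy hxy => hBpair hx hy hxy
    have hU := union_pairwise hBpair' hSpair hvi hvi1
      ⟨i, rfl⟩ ⟨i + 1, rfl⟩ (hinjF.ne (hsucc_ne i))
    have heq : BFF i ∪ S = BFF i := hblk.2.2 (BFF i ∪ S) Set.subset_union_left
      (fun x hx y hy hxy => hU x hx y hy hxy)
    rw [← heq]
    exact Set.subset_union_right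
  -- two distinct blocks both contain all cycle vertices: contradiction
  have hne01 : (0 : Fin k) ≠ 1 := by
    intro h
    have := congrArg Fin.val h
    rw [hone] at this
    simp at this
  have hBFF01 : BFF 0 ≠ BFF 1 := by
    rw [hBFF]
    simp only
    rw [Fin.val_zero, hone]
    exact hB01
  have hv0B0 : vvF 0 ∈ BFF 0 := absorb 0 ⟨0, rfl⟩
  have hv1B0 : vvF 1 ∈ BFF 0 := absorb 0 ⟨1, rfl⟩
  have hv0B1 : vvF 0 ∈ BFF 1 := absorb 1 ⟨0, rfl⟩
  have hv1B1 : vvF 1 ∈ BFF 1 := absorb 1 ⟨1, rfl⟩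
  obtain ⟨hblk0, -, -⟩ := hccF 0
  obtain ⟨hblk1, -, -⟩ := hccF 1
  have hU := union_pairwise (fun x hx y hy hxy => hblk0.2.1 hx hy hxy)
    (fun x hx y hy hxy => hblk1.2.1 hx hy hxy)
    hv0B0 hv1B0 hv0B1 hv1B1 (hinjF.ne hne01)
  have he0 : BFF 0 ∪ BFF 1 = BFF 0 := hblk0.2.2 _ Set.subset_union_left
    (fun x hx y hy hxy => hU x hx y hy hxy)
  have he1 : BFF 0 ∪ BFF 1 = BFF 1 := hblk1.2.2 _ Set.subset_union_right
    (fun x hx y hy hxy => hU x hx y hy hxy)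
  exact hBFF01 (he0 ▸ he1)

end Main

/-- The 2-twinless block graph of a twinless strongly connected directed graph is a
forest, i.e., it contains no cycle. -/
theorem blockGraph_isAcyclic
    {V : Type*} [Fintype V] (E : V → V → Prop)
    (hG : TwinlessSCOn E Set.univ) :
    (blockGraph E).IsAcyclic := by
  classical
  rintro (B | v) c hc
  · have h0 : 0 < c.length := by have := hc.three_le_length; omega
    have hadj := c.adj_getVert_succ h0
    rw [c.getVert_zero] at hadj
    rcases hx : c.getVert 1 with B' | v
    · rw [hx] at hadj
      exact absurd hadj (by simp [blockGraph])
    · have hmem : Sum.inr v ∈ c.support :=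
        SimpleGraph.Walk.mem_support_iff_exists_getVert.mpr ⟨1, hx, by omega⟩
      exact no_cycle_at_inr E v (c.rotate _ hmem) (hc.rotate hmem)
  · exact no_cycle_at_inr E v c hc
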